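/- If ρ ∈ [0,1) and the perturbation is supported at a single stage j (i.e., d and d′ agree at all stages except j), then in the setting of the stage-wise Lipschitz bound, ‖z_i(d) − z_i(d′)‖ ≤ Γ ρ^{max(|i−j|−1,0)} ‖d_j − d′_j‖, and in particular the effect on stage 1 of a perturbation at stage j decays like ρ^{j−2} for j ≥ 2. -/

import Mathlib

open Matrix

/-- Euclidean (ℓ²) norm of a finite real vector. -/
noncomputable def l2enorm {α : Type*} [Fintype α] (v : α → ℝ) : ℝ :=
  ‖(WithLp.equiv 2 (α → ℝ)).symm v‖

section helpers
variable {α : Type*} [Fintype α]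

lemma l2enorm_eq (v : α → ℝ) : l2enorm v = Real.sqrt (∑ i, v i ^ 2) := by
  rw [l2enorm, EuclideanSpace.norm_eq]
  congr 1
  refine Finset.sum_congr rfl fun i _ => ?_
  simp [WithLp.equiv_symm_apply, PiLp.toLp_apply, Real.norm_eq_abs, sq_abs]

lemma l2enorm_nonneg' (v : α → ℝ) : 0 ≤ l2enorm v := norm_nonneg _

lemma sq_enorm (v : α → ℝ) : l2enorm v ^ 2 = ∑ i, v i ^ 2 := by
  rw [l2enorm_eq, Real.sq_sqrt (Finset.sum_nonneg fun i _ => sq_nonneg _)]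

lemma dotProduct_self_eq (v : α → ℝ) : v ⬝ᵥ v = l2enorm v ^ 2 := by
  rw [sq_enorm, dotProduct]
  exact Finset.sum_congr rfl fun i _ => (pow_two (v i)).symm

lemma l2enorm_add_le (v w : α → ℝ) : l2enorm (v + w) ≤ l2enorm v + l2enorm w := by
  rw [l2enorm, l2enorm, l2enorm, WithLp.equiv_symm_apply, WithLp.toLp_add]; exact norm_add_le _ _

lemma l2enorm_smul' (c : ℝ) (v : α → ℝ) : l2enorm (c • v) = |c| * l2enorm v := by
  rw [l2enorm, l2enorm, WithLp.equiv_symm_apply, WithLp.toLp_smul, norm_smul, Real.norm_eq_abs]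

lemma l2enorm_zero' : l2enorm (0 : α → ℝ) = 0 := by
  rw [l2enorm, WithLp.equiv_symm_apply, WithLp.toLp_zero, norm_zero]

lemma dotProduct_le (v w : α → ℝ) : v ⬝ᵥ w ≤ l2enorm v * l2enorm w := by
  have h := real_inner_le_norm ((WithLp.equiv 2 (α → ℝ)).symm v) ((WithLp.equiv 2 (α → ℝ)).symm w)
  rw [PiLp.inner_apply] at h
  simpa [dotProduct, WithLp.equiv_symm_apply, PiLp.toLp_apply, l2enorm, mul_comm] using h

lemma l2enorm_sum_le {β : Type*} (s : Finset β) (f : β → α → ℝ) :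
    l2enorm (∑ k ∈ s, f k) ≤ ∑ k ∈ s, l2enorm (f k) := by
  classical
  induction s using Finset.induction with
  | empty => simp [l2enorm_zero']
  | @insert _ _ h ih =>
    rw [Finset.sum_insert h, Finset.sum_insert h]
    exact (l2enorm_add_le _ _).trans (by linarith)

variable [DecidableEq α]

lemma opbound (M : Matrix α α ℝ) (r : ℝ) (hr : 0 ≤ r)
    (h : (r • (1 : Matrix α α ℝ) - Mᵀ * M).PosSemidef) (x : α → ℝ) :
    l2enorm (M *ᵥ x) ≤ Real.sqrt r * l2enorm x := by
  have h2 := h.dotProduct_mulVec_nonneg x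
  rw [star_trivial, sub_mulVec, dotProduct_sub, sub_nonneg, ← mulVec_mulVec,
    dotProduct_mulVec, vecMul_transpose, smul_mulVec, one_mulVec,
    dotProduct_smul] at h2
  rw [dotProduct_self_eq, dotProduct_self_eq] at h2
  calc l2enorm (M *ᵥ x) = Real.sqrt (l2enorm (M *ᵥ x) ^ 2) := by
        rw [Real.sqrt_sq (l2enorm_nonneg' _)]
    _ ≤ Real.sqrt (r * l2enorm x ^ 2) := Real.sqrt_le_sqrt (by simpa using h2)
    _ = Real.sqrt r * l2enorm x := by
        rw [Real.sqrt_mul hr, Real.sqrt_sq (l2enorm_nonneg' _)]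

lemma opbound_transpose (M : Matrix α α ℝ) (s : ℝ) (hs : 0 ≤ s)
    (h : ∀ x, l2enorm (M *ᵥ x) ≤ s * l2enorm x) (y : α → ℝ) :
    l2enorm (Mᵀ *ᵥ y) ≤ s * l2enorm y := by
  set z := Mᵀ *ᵥ y with hz
  have key : l2enorm z ^ 2 ≤ s * l2enorm z * l2enorm y := by
    have h1 : z ⬝ᵥ z = (M *ᵥ z) ⬝ᵥ y := by
      rw [hz]; rw [dotProduct_mulVec, vecMul_transpose]
    calc l2enorm z ^ 2 = (M *ᵥ z) ⬝ᵥ y := by rw [← dotProduct_self_eq, h1]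
      _ ≤ l2enorm (M *ᵥ z) * l2enorm y := dotProduct_le _ _
      _ ≤ s * l2enorm z * l2enorm y :=
          mul_le_mul_of_nonneg_right (h z) (l2enorm_nonneg' _)
  rcases eq_or_lt_of_le (l2enorm_nonneg' z) with h0 | h0
  · rw [← h0]; exact mul_nonneg hs (l2enorm_nonneg' _)
  · nlinarith [l2enorm_nonneg' y]

end helpers

lemma l2enorm_block_le {N n : ℕ} (v : Fin N × Fin n → ℝ) (i : Fin N) :
    l2enorm (fun a => v (i, a)) ≤ l2enorm v := by
  rw [l2enorm_eq, l2enorm_eq]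
  apply Real.sqrt_le_sqrt
  rw [Fintype.sum_prod_type]
  exact Finset.single_le_sum (f := fun k => ∑ a, v (k, a) ^ 2)
    (fun k _ => Finset.sum_nonneg fun a _ => sq_nonneg _) (Finset.mem_univ i)

lemma posSemidef_smul_real {α : Type*} [Fintype α] {M : Matrix α α ℝ} (hM : M.PosSemidef)
    {c : ℝ} (hc : 0 ≤ c) : (c • M).PosSemidef := by
  refine PosSemidef.of_dotProduct_mulVec_nonneg ?_ ?_
  · rw [Matrix.IsHermitian, conjTranspose_smul, star_trivial, hM.1.eq]
  · intro x
    rw [smul_mulVec, dotProduct_smul, smul_eq_mul]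
    exact mul_nonneg hc (hM.dotProduct_mulVec_nonneg x)

set_option maxHeartbeats 2000000 in
theorem stmt_9 {N n : ℕ} (A : Matrix (Fin N × Fin n) (Fin N × Fin n) ℝ) (sig Sig : ℝ)
    (hinv : IsUnit A) (hsig : 0 < sig) (hle : sig ≤ Sig)
    (hlo : (Aᵀ * A - sig ^ 2 • (1 : Matrix (Fin N × Fin n) (Fin N × Fin n) ℝ)).PosSemidef)
    (hhi : (Sig ^ 2 • (1 : Matrix (Fin N × Fin n) (Fin N × Fin n) ℝ) - Aᵀ * A).PosSemidef)
    (hband : ∀ (i j : Fin N) (a b : Fin n),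
      ¬(0 ≤ (i : ℤ) - (j : ℤ) ∧ (i : ℤ) - (j : ℤ) ≤ 1) → A (i, a) (j, b) = 0)
    (hρ : 0 ≤ (Sig ^ 2 - sig ^ 2) / (Sig ^ 2 + sig ^ 2) ∧
          (Sig ^ 2 - sig ^ 2) / (Sig ^ 2 + sig ^ 2) < 1)
    (d d' : Fin N × Fin n → ℝ) (j : Fin N)
    (hsupp : ∀ k : Fin N, k ≠ j → ∀ a : Fin n, d (k, a) = d' (k, a)) :
    ∀ i : Fin N,
      l2enorm (fun a : Fin n => A⁻¹.mulVec d (i, a) - A⁻¹.mulVec d' (i, a)) ≤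
        (Sig / sig ^ 2) *
            ((Sig ^ 2 - sig ^ 2) / (Sig ^ 2 + sig ^ 2)) ^ (((i : ℤ) - (j : ℤ)).natAbs - 1) *
          l2enorm (fun a : Fin n => d (j, a) - d' (j, a)) := by
  intro i
  classical
  obtain ⟨hρ0, hρ1⟩ := hρ
  have hSig : 0 < Sig := lt_of_lt_of_le hsig hle
  set a := sig ^ 2 with ha'
  set b := Sig ^ 2 with hb'
  have ha : 0 < a := by positivity
  have hb : 0 < b := by positivity
  set ρ : ℝ := (b - a) / (b + a) with hρdef
  set c : ℝ := 2 / (b + a) with hc'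
  have hc : 0 < c := by positivity
  have hca : c * a = 1 - ρ := by
    rw [hc', hρdef]; field_simp; ring
  have hcb : c * b = 1 + ρ := by
    rw [hc', hρdef]; field_simp; ring
  have hhi' := hhi
  have hlo' := hlo
  set m₀ : ℕ := ((i : ℤ) - (j : ℤ)).natAbs - 1 with hm₀
  clear_value a b ρ c m₀
  have hba : b + a ≠ 0 := by positivity
  set H : Matrix (Fin N × Fin n) (Fin N × Fin n) ℝ := Aᵀ * A with hH
  set B : Matrix (Fin N × Fin n) (Fin N × Fin n) ℝ := (1 : Matrix (Fin N × Fin n) (Fin N × Fin n) ℝ) - c • H with hB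
  clear_value H B
  have hBsymm : Bᵀ = B := by
    rw [hB, transpose_sub, transpose_one, transpose_smul, hH, transpose_mul,
      transpose_transpose]
  -- PSD facts
  have hP : (ρ • (1 : Matrix (Fin N × Fin n) (Fin N × Fin n) ℝ) - B).PosSemidef := by
    have h1 : ρ • (1 : Matrix (Fin N × Fin n) (Fin N × Fin n) ℝ) - B = c • (H - a • 1) := by
      rw [hB, smul_sub, smul_smul, hca, sub_smul, one_smul]; abel
    rw [h1]
    exact posSemidef_smul_real hlo hc.le
  have hQ : (ρ • (1 : Matrix (Fin N × Fin n) (Fin N × Fin n) ℝ) + B).PosSemidef := by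
    have h1 : ρ • (1 : Matrix (Fin N × Fin n) (Fin N × Fin n) ℝ) + B = c • (b • 1 - H) := by
      rw [hB, smul_sub, smul_smul, hcb, add_smul, one_smul]; abel
    rw [h1]
    exact posSemidef_smul_real hhi hc.le
  have hPQ : (ρ • (1 : Matrix (Fin N × Fin n) (Fin N × Fin n) ℝ) - B) * (ρ • 1 + B) = (ρ ^ 2) • 1 - B * B := by
    have e : ρ * ρ = ρ ^ 2 := (sq ρ).symm
    simp only [Matrix.sub_mul, Matrix.mul_add, Matrix.smul_mul, Matrix.mul_smul,
      Matrix.one_mul, Matrix.mul_one, smul_smul, e]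
    module
  obtain ⟨S, hSpsd, hSS⟩ :
      ∃ S : Matrix (Fin N × Fin n) (Fin N × Fin n) ℝ, S.PosSemidef ∧ S * S = ρ • 1 - B :=
    by open scoped MatrixOrder in exact ⟨CFC.sqrt _, (CFC.sqrt_nonneg _).posSemidef, CFC.sqrt_mul_sqrt_self _ hP.nonneg⟩
  have hcomm : S * (ρ • (1 : Matrix (Fin N × Fin n) (Fin N × Fin n) ℝ) + B) =
      (ρ • (1 : Matrix (Fin N × Fin n) (Fin N × Fin n) ℝ) + B) * S := by
    have h2 : ρ • (1 : Matrix (Fin N × Fin n) (Fin N × Fin n) ℝ) + B = (2 * ρ) • 1 - (ρ • 1 - B) := by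
      rw [two_mul, add_smul]; abel
    rw [h2, ← hSS]
    simp only [Matrix.mul_sub, Matrix.sub_mul, Matrix.mul_smul, Matrix.smul_mul,
      Matrix.mul_one, Matrix.one_mul, Matrix.mul_assoc]
  have hBBpsd : ((ρ ^ 2) • (1 : Matrix (Fin N × Fin n) (Fin N × Fin n) ℝ) - Bᵀ * B).PosSemidef := by
    rw [hBsymm, ← hPQ, ← hSS, Matrix.mul_assoc, hcomm, ← Matrix.mul_assoc]
    have h3 := hQ.conjTranspose_mul_mul_same S
    rwa [hSpsd.1.eq] at h3
  -- contraction estimates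
  have hBcon : ∀ x : (Fin N × Fin n) → ℝ, l2enorm (B *ᵥ x) ≤ ρ * l2enorm x := by
    intro x
    have h4 := opbound B (ρ ^ 2) (sq_nonneg ρ) hBBpsd x
    rwa [Real.sqrt_sq hρ0] at h4
  have hBkcon : ∀ (k : ℕ) (x : (Fin N × Fin n) → ℝ), l2enorm (B ^ k *ᵥ x) ≤ ρ ^ k * l2enorm x := by
    intro k
    induction k with
    | zero => intro x; simp [one_mulVec]
    | succ k ih =>
      intro x
      rw [pow_succ', ← mulVec_mulVec]
      calc l2enorm (B *ᵥ (B ^ k *ᵥ x)) ≤ ρ * l2enorm (B ^ k *ᵥ x) := hBcon _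
        _ ≤ ρ * (ρ ^ k * l2enorm x) := mul_le_mul_of_nonneg_left (ih x) hρ0
        _ = ρ ^ (k + 1) * l2enorm x := by ring
  have hAcon : ∀ x : (Fin N × Fin n) → ℝ, l2enorm (A *ᵥ x) ≤ Sig * l2enorm x := by
    intro x
    rw [hH] at hhi'
    have h5 := opbound A b hb.le hhi' x
    rwa [hb', Real.sqrt_sq hSig.le] at h5
  have hATcon : ∀ y : (Fin N × Fin n) → ℝ, l2enorm (Aᵀ *ᵥ y) ≤ Sig * l2enorm y :=
    opbound_transpose A Sig hSig.le hAcon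
  -- vectors
  set δ : (Fin N × Fin n) → ℝ := d - d' with hδdef
  set u : (Fin N × Fin n) → ℝ := A⁻¹ *ᵥ δ with hudef
  set w : (Fin N × Fin n) → ℝ := Aᵀ *ᵥ δ with hwdef
  clear_value δ u w
  have hAinv : A * A⁻¹ = 1 := Matrix.mul_nonsing_inv A (Matrix.isUnit_iff_isUnit_det A |>.mp hinv)
  have hAu : A *ᵥ u = δ := by rw [hudef, mulVec_mulVec, hAinv, one_mulVec]
  have hHu : H *ᵥ u = w := by rw [hH, ← mulVec_mulVec, hAu, hwdef]
  have hrec : u = B *ᵥ u + c • w := by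
    rw [hB, sub_mulVec, one_mulVec, smul_mulVec, hHu]; abel
  have hunroll : ∀ K : ℕ, u = B ^ K *ᵥ u + c • ∑ k ∈ Finset.range K, B ^ k *ᵥ w := by
    intro K
    induction K with
    | zero => rw [pow_zero, one_mulVec]; simp
    | succ K ih =>
      have step : B ^ K *ᵥ u = B ^ (K + 1) *ᵥ u + c • (B ^ K *ᵥ w) := by
        conv_lhs => rw [hrec]
        rw [mulVec_add, mulVec_smul, mulVec_mulVec, ← pow_succ]
      calc u = B ^ K *ᵥ u + c • ∑ k ∈ Finset.range K, B ^ k *ᵥ w := ih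
        _ = (B ^ (K + 1) *ᵥ u + c • (B ^ K *ᵥ w)) +
            c • ∑ k ∈ Finset.range K, B ^ k *ᵥ w := by rw [step]
        _ = B ^ (K + 1) *ᵥ u + c • ∑ k ∈ Finset.range (K + 1), B ^ k *ᵥ w := by
            rw [Finset.sum_range_succ, smul_add]; abel
  -- bandwidth facts
  have hB1 : ∀ (l q : Fin N) (cc bb : Fin n), 1 < ((l : ℤ) - (q : ℤ)).natAbs →
      B (l, cc) (q, bb) = 0 := by
    intro l q cc bb hlq
    have hlq' : l ≠ q := by rintro rfl; simp at hlq
    have hne : ((l, cc) : (Fin N × Fin n)) ≠ (q, bb) := fun h => hlq' (congrArg Prod.fst h)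
    rw [hB, Matrix.sub_apply, Matrix.one_apply_ne hne, Matrix.smul_apply, hH,
      Matrix.mul_apply]
    rw [Finset.sum_eq_zero, smul_zero, sub_zero]
    rintro ⟨p, e⟩ -
    rw [transpose_apply]
    by_cases h1 : (0 : ℤ) ≤ (p : ℤ) - (l : ℤ) ∧ (p : ℤ) - (l : ℤ) ≤ 1
    · rw [hband p q e bb (by omega), mul_zero]
    · rw [hband p l e cc h1, zero_mul]
  have hBk : ∀ (k : ℕ) (p q : Fin N) (aa bb : Fin n), k < ((p : ℤ) - (q : ℤ)).natAbs →
      (B ^ k) (p, aa) (q, bb) = 0 := by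
    intro k
    induction k with
    | zero =>
      intro p q aa bb h
      have hpq : p ≠ q := by rintro rfl; simp at h
      rw [pow_zero, Matrix.one_apply_ne (fun hh => hpq (congrArg Prod.fst hh))]
    | succ k ih =>
      intro p q aa bb h
      rw [pow_succ, Matrix.mul_apply]
      apply Finset.sum_eq_zero
      rintro ⟨l, cc⟩ -
      by_cases h1 : k < ((p : ℤ) - (l : ℤ)).natAbs
      · rw [ih p l aa cc h1, zero_mul]
      · rw [hB1 l q cc bb (by omega), mul_zero]
  have hwsupp : ∀ (m : Fin N) (bb : Fin n),
      ¬(0 ≤ (j : ℤ) - (m : ℤ) ∧ (j : ℤ) - (m : ℤ) ≤ 1) → w (m, bb) = 0 := by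
    intro m bb hm
    rw [hwdef]
    show ∑ p : (Fin N × Fin n), Aᵀ (m, bb) p * δ p = 0
    apply Finset.sum_eq_zero
    rintro ⟨l, cc⟩ -
    by_cases hl : l = j
    · subst hl
      rw [transpose_apply, hband l m cc bb hm, zero_mul]
    · have : δ (l, cc) = 0 := by
        rw [hδdef]; show d (l, cc) - d' (l, cc) = 0
        rw [hsupp l hl cc, sub_self]
      rw [this, mul_zero]
  have hzero : ∀ (k : ℕ), k + 1 < ((i : ℤ) - (j : ℤ)).natAbs →
      ∀ aa : Fin n, (B ^ k *ᵥ w) (i, aa) = 0 := by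
    intro k hk aa
    show ∑ p : (Fin N × Fin n), (B ^ k) (i, aa) p * w p = 0
    apply Finset.sum_eq_zero
    rintro ⟨m, bb⟩ -
    by_cases hm : 0 ≤ (j : ℤ) - (m : ℤ) ∧ (j : ℤ) - (m : ℤ) ≤ 1
    · rw [hBk k i m aa bb (by omega), zero_mul]
    · rw [hwsupp m bb hm, mul_zero]
  -- norms of δ and w
  set D : ℝ := l2enorm (fun aa : Fin n => d (j, aa) - d' (j, aa)) with hD
  clear_value D
  have hδblock : l2enorm δ = D := by
    rw [hD, l2enorm_eq, l2enorm_eq]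
    congr 1
    rw [Fintype.sum_prod_type]
    rw [Finset.sum_eq_single j]
    · refine Finset.sum_congr rfl fun aa _ => ?_
      rw [hδdef]
      rfl
    · intro k _ hk
      apply Finset.sum_eq_zero
      intro aa _
      have : δ (k, aa) = 0 := by
        rw [hδdef]; show d (k, aa) - d' (k, aa) = 0
        rw [hsupp k hk aa, sub_self]
      rw [this]; ring
    · intro hj; exact absurd (Finset.mem_univ j) hj
  have hwnorm : l2enorm w ≤ Sig * D := by
    rw [hwdef, ← hδblock]
    exact hATcon δ
  have hD0 : 0 ≤ D := by rw [hD]; exact l2enorm_nonneg' _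
  -- geometric sum
  have hgeo : ∀ K : ℕ, ∑ k ∈ Finset.Ico m₀ K, ρ ^ k ≤ ρ ^ m₀ / (1 - ρ) := by
    intro K
    rcases le_or_gt m₀ K with hK | hK
    · rw [Finset.sum_Ico_eq_sum_range]
      have e1 : ∀ t ∈ Finset.range (K - m₀), ρ ^ (m₀ + t) = ρ ^ m₀ * ρ ^ t := fun t _ =>
        pow_add ρ m₀ t
      rw [Finset.sum_congr rfl e1, ← Finset.mul_sum]
      have hgs : ∑ t ∈ Finset.range (K - m₀), ρ ^ t ≤ 1 / (1 - ρ) := by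
        rw [le_div_iff₀ (by linarith : (0:ℝ) < 1 - ρ)]
        have h6 := geom_sum_mul ρ (K - m₀)
        nlinarith [pow_nonneg hρ0 (K - m₀)]
      calc ρ ^ m₀ * ∑ t ∈ Finset.range (K - m₀), ρ ^ t
          ≤ ρ ^ m₀ * (1 / (1 - ρ)) := mul_le_mul_of_nonneg_left hgs (pow_nonneg hρ0 _)
        _ = ρ ^ m₀ / (1 - ρ) := by ring
    · rw [Finset.Ico_eq_empty (by omega), Finset.sum_empty]
      exact div_nonneg (pow_nonneg hρ0 _) (by linarith)
  -- per-K bound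
  have hKbound : ∀ K : ℕ,
      l2enorm (fun aa : Fin n => u (i, aa)) ≤ ρ ^ K * l2enorm u + Sig / a * ρ ^ m₀ * D := by
    intro K
    have h1 : (fun aa : Fin n => u (i, aa)) =
        (fun aa : Fin n => (B ^ K *ᵥ u) (i, aa)) +
          fun aa : Fin n => (c • ∑ k ∈ Finset.range K, B ^ k *ᵥ w) (i, aa) := by
      funext aa
      have h7 := congrFun (hunroll K) (i, aa)
      simpa using h7
    rw [h1]
    refine (l2enorm_add_le _ _).trans ?_
    have t1 : l2enorm (fun aa : Fin n => (B ^ K *ᵥ u) (i, aa)) ≤ ρ ^ K * l2enorm u :=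
      (l2enorm_block_le _ i).trans (hBkcon K u)
    have t2 : l2enorm (fun aa : Fin n => (c • ∑ k ∈ Finset.range K, B ^ k *ᵥ w) (i, aa)) ≤
        Sig / a * ρ ^ m₀ * D := by
      have e1 : (fun aa : Fin n => (c • ∑ k ∈ Finset.range K, B ^ k *ᵥ w) (i, aa)) =
          c • fun aa : Fin n => (∑ k ∈ Finset.range K, B ^ k *ᵥ w) (i, aa) := rfl
      rw [e1, l2enorm_smul', abs_of_pos hc]
      have e2 : (fun aa : Fin n => (∑ k ∈ Finset.range K, B ^ k *ᵥ w) (i, aa)) =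
          ∑ k ∈ Finset.range K, fun aa : Fin n => (B ^ k *ᵥ w) (i, aa) := by
        funext aa
        simp [Finset.sum_apply]
      rw [e2]
      have t3 : ∑ k ∈ Finset.range K, l2enorm (fun aa : Fin n => (B ^ k *ᵥ w) (i, aa)) =
          ∑ k ∈ Finset.Ico m₀ K, l2enorm (fun aa : Fin n => (B ^ k *ᵥ w) (i, aa)) := by
        symm
        apply Finset.sum_subset
        · intro x hx
          rw [Finset.mem_Ico] at hx
          rw [Finset.mem_range]
          exact hx.2
        · intro x hx hx'
          rw [Finset.mem_range] at hx
          rw [Finset.mem_Ico] at hx'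
          have hxm : x + 1 < ((i : ℤ) - (j : ℤ)).natAbs := by omega
          have : (fun aa : Fin n => (B ^ x *ᵥ w) (i, aa)) = (0 : Fin n → ℝ) := by
            funext aa; exact hzero x hxm aa
          rw [this, l2enorm_zero']
      have t4 : ∑ k ∈ Finset.Ico m₀ K, l2enorm (fun aa : Fin n => (B ^ k *ᵥ w) (i, aa)) ≤
          ∑ k ∈ Finset.Ico m₀ K, ρ ^ k * l2enorm w :=
        Finset.sum_le_sum fun k _ => (l2enorm_block_le _ i).trans (hBkcon k w)
      have t5 : ∑ k ∈ Finset.Ico m₀ K, ρ ^ k * l2enorm w ≤ ρ ^ m₀ / (1 - ρ) * (Sig * D) := by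
        rw [← Finset.sum_mul]
        have hw0 : 0 ≤ l2enorm w := l2enorm_nonneg' _
        calc (∑ k ∈ Finset.Ico m₀ K, ρ ^ k) * l2enorm w
            ≤ ρ ^ m₀ / (1 - ρ) * l2enorm w := by
              apply mul_le_mul_of_nonneg_right (hgeo K) hw0
          _ ≤ ρ ^ m₀ / (1 - ρ) * (Sig * D) := by
              apply mul_le_mul_of_nonneg_left hwnorm
              exact div_nonneg (pow_nonneg hρ0 _) (by linarith)
      calc c * l2enorm (∑ k ∈ Finset.range K, fun aa : Fin n => (B ^ k *ᵥ w) (i, aa))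
          ≤ c * ∑ k ∈ Finset.range K, l2enorm (fun aa : Fin n => (B ^ k *ᵥ w) (i, aa)) :=
            mul_le_mul_of_nonneg_left (l2enorm_sum_le _ _) hc.le
        _ ≤ c * (ρ ^ m₀ / (1 - ρ) * (Sig * D)) := by
            rw [t3]
            exact mul_le_mul_of_nonneg_left (t4.trans t5) hc.le
        _ = Sig / a * ρ ^ m₀ * D := by
            rw [← hca]
            field_simp
    exact add_le_add t1 t2
  -- pass to the limit
  have hgoalv : (fun aa : Fin n => A⁻¹.mulVec d (i, aa) - A⁻¹.mulVec d' (i, aa)) =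
      fun aa : Fin n => u (i, aa) := by
    funext aa
    rw [hudef, hδdef, mulVec_sub]
    rfl
  rw [hgoalv]
  have htend : Filter.Tendsto (fun K : ℕ => ρ ^ K * l2enorm u + Sig / a * ρ ^ m₀ * D)
      Filter.atTop (nhds (0 * l2enorm u + Sig / a * ρ ^ m₀ * D)) :=
    (((tendsto_pow_atTop_nhds_zero_of_lt_one hρ0 hρ1).mul_const _).add_const _)
  have := ge_of_tendsto htend (Filter.Eventually.of_forall hKbound)
  simpa using this
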